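/- For a ∈ (0,1) and z < 0, as z → -∞, the Lerch transcendent with s = 1 satisfies Φ(z, 1, a) ~ (π / sin(aπ)) · (-z)^{-a}; that is, lim_{z→-∞} (-z)^a · Φ(z,1,a) = π/sin(aπ), where Φ(z,1,a) = ∫₀^∞ e^{-a t}/(1 - z e^{-t}) dt. -/

import Mathlib

open MeasureTheory Real Set Filter Topology

lemma lerch_beta_real_aux (a : ℝ) (ha0 : 0 < a) (ha1 : a < 1) :
    (∫ x in Ioo (0:ℝ) 1, x ^ (a-1) * (1-x) ^ (-a)) = π / Real.sin (π * a) ∧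
    IntegrableOn (fun x : ℝ => x ^ (a-1) * (1-x) ^ (-a)) (Ioo (0:ℝ) 1) := by
  have hre : 0 < Complex.re (a : ℂ) := by simpa using ha0
  have hre' : 0 < Complex.re (1 - (a : ℂ)) := by simp [Complex.sub_re]; linarith
  have hEq : ∀ x ∈ Icc (0:ℝ) 1,
      ((x : ℂ) ^ ((a:ℂ) - 1) * (1 - (x:ℂ)) ^ ((1 - (a:ℂ)) - 1))
        = ((x ^ (a-1) * (1-x) ^ (-a) : ℝ) : ℂ) := by
    intro x hx
    have h1 : (0:ℝ) ≤ x := hx.1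
    have h2 : (0:ℝ) ≤ 1 - x := by linarith [hx.2]
    rw [Complex.ofReal_mul, Complex.ofReal_cpow h1, Complex.ofReal_cpow h2]
    push_cast
    ring_nf
  constructor
  · have hβ : Complex.betaIntegral a (1 - a) = (π : ℂ) / Complex.sin (π * a) := by
      have h := Complex.Gamma_mul_Gamma_eq_betaIntegral hre hre'
      rw [add_sub_cancel, Complex.Gamma_one, one_mul] at h
      rw [← h, Complex.Gamma_mul_Gamma_one_sub]
    rw [Complex.betaIntegral] at hβ
    have hint : (∫ x in (0:ℝ)..1, ((x : ℂ) ^ ((a:ℂ) - 1) * (1 - (x:ℂ)) ^ ((1 - (a:ℂ)) - 1)))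
        = ((∫ x in (0:ℝ)..1, x ^ (a-1) * (1-x) ^ (-a) : ℝ) : ℂ) := by
      rw [← intervalIntegral.integral_ofReal]
      apply intervalIntegral.integral_congr
      intro x hx
      rw [uIcc_of_le zero_le_one] at hx
      exact hEq x hx
    rw [hint] at hβ
    have hsin : Complex.sin (π * a) = ((Real.sin (π * a) : ℝ) : ℂ) := by
      rw [Complex.ofReal_sin]; push_cast; ring_nf
    rw [hsin] at hβ
    have : ((∫ x in (0:ℝ)..1, x ^ (a-1) * (1-x) ^ (-a) : ℝ) : ℂ)
        = (((π / Real.sin (π * a)) : ℝ) : ℂ) := by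
      rw [hβ]; push_cast; ring
    have h2 := Complex.ofReal_injective this
    rw [← h2, intervalIntegral.integral_of_le zero_le_one, integral_Ioc_eq_integral_Ioo]
  · have hconv := Complex.betaIntegral_convergent hre hre'
    have h1 : IntegrableOn (fun x : ℝ =>
        ((x : ℂ) ^ ((a:ℂ) - 1) * (1 - (x:ℂ)) ^ ((1 - (a:ℂ)) - 1))) (Ioo (0:ℝ) 1) := by
      have := (intervalIntegrable_iff_integrableOn_Ioc_of_le zero_le_one).mp hconv
      exact this.mono_set Ioo_subset_Ioc_self
    have h2 : IntegrableOn (fun x : ℝ =>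
        ((x ^ (a-1) * (1-x) ^ (-a) : ℝ) : ℂ)) (Ioo (0:ℝ) 1) := by
      apply h1.congr_fun _ measurableSet_Ioo
      intro x hx
      exact hEq x (Ioo_subset_Icc_self hx)
    have := (Complex.reCLM : ℂ →L[ℝ] ℝ).integrable_comp h2
    simpa [IntegrableOn] using this

lemma lerch_subst_lemma :
    ((fun x : ℝ => x / (1 - x)) '' Ioo (0:ℝ) 1 = Ioi (0:ℝ)) ∧
    (∀ x ∈ Ioo (0:ℝ) 1, HasDerivWithinAt (fun x : ℝ => x / (1 - x))
      (((1 - x) ^ 2)⁻¹) (Ioo (0:ℝ) 1) x) ∧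
    InjOn (fun x : ℝ => x / (1 - x)) (Ioo (0:ℝ) 1) := by
  refine ⟨?_, ?_, ?_⟩
  · ext u
    simp only [mem_image, mem_Ioo, mem_Ioi]
    constructor
    · rintro ⟨x, ⟨h0, h1⟩, rfl⟩
      exact div_pos h0 (by linarith)
    · intro hu
      refine ⟨u / (1 + u), ⟨div_pos hu (by linarith), ?_⟩, ?_⟩
      · rw [div_lt_one (by linarith)]; linarith
      · have h : (1 : ℝ) + u ≠ 0 := by positivity
        field_simp
        ring
  · intro x hx
    have h : (1 : ℝ) - x ≠ 0 := by rw [mem_Ioo] at hx; intro h; linarith [hx.2, h]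
    have := (hasDerivAt_id x).div ((hasDerivAt_const x (1:ℝ)).sub (hasDerivAt_id x)) h
    refine this.hasDerivWithinAt.congr_deriv ?_
    simp only [Pi.sub_apply, id]
    field_simp
    ring
  · intro x hx y hy h
    simp only [mem_Ioo] at hx hy
    have h1 : (1:ℝ) - x ≠ 0 := by intro h'; linarith [hx.2]
    have h2 : (1:ℝ) - y ≠ 0 := by intro h'; linarith [hy.2]
    field_simp at h
    linarith [h]

lemma lerch_eqOn_lemma (a : ℝ) : ∀ x ∈ Ioo (0:ℝ) 1,
    |((1 - x) ^ 2)⁻¹| • ((x / (1 - x)) ^ (a-1) / (1 + x / (1 - x)))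
      = x ^ (a-1) * (1-x) ^ (-a) := by
  intro x hx
  rw [mem_Ioo] at hx
  have hx0 : 0 < x := hx.1
  have hy : 0 < 1 - x := by linarith [hx.2]
  rw [smul_eq_mul, abs_of_pos (by positivity)]
  have h1 : 1 + x / (1 - x) = (1 - x)⁻¹ := by field_simp; ring
  rw [h1, Real.div_rpow hx0.le hy.le]
  rw [div_inv_eq_mul]
  have key : (((1-x) ^ 2 : ℝ))⁻¹ * (((1-x) ^ (a-1))⁻¹ * (1-x)) = (1-x) ^ (-a) := by
    rw [← Real.rpow_natCast (1-x) 2, ← Real.rpow_neg hy.le, ← Real.rpow_neg hy.le,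
      ← Real.rpow_add_one hy.ne' (-(a-1)), ← Real.rpow_add hy]
    push_cast
    ring_nf
  calc (((1-x) ^ 2 : ℝ))⁻¹ * (x ^ (a-1) / (1-x) ^ (a-1) * (1-x))
      = x ^ (a-1) * ((((1-x) ^ 2 : ℝ))⁻¹ * (((1-x) ^ (a-1))⁻¹ * (1-x))) := by ring
    _ = x ^ (a-1) * (1-x) ^ (-a) := by rw [key]

lemma lerch_F_integral (a : ℝ) (ha0 : 0 < a) (ha1 : a < 1) :
    (∫ u in Ioi (0:ℝ), u ^ (a-1) / (1 + u)) = π / Real.sin (π * a) ∧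
    IntegrableOn (fun u : ℝ => u ^ (a-1) / (1 + u)) (Ioi (0:ℝ)) := by
  obtain ⟨himg, hder, hinj⟩ := lerch_subst_lemma
  obtain ⟨hval, hint⟩ := lerch_beta_real_aux a ha0 ha1
  have hchg := integral_image_eq_integral_abs_deriv_smul measurableSet_Ioo hder hinj
    (fun u : ℝ => u ^ (a-1) / (1 + u))
  rw [himg] at hchg
  have hiff := integrableOn_image_iff_integrableOn_abs_deriv_smul measurableSet_Ioo hder hinj
    (fun u : ℝ => u ^ (a-1) / (1 + u))
  rw [himg] at hiff
  constructor
  · rw [hchg]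
    rw [setIntegral_congr_fun measurableSet_Ioo (lerch_eqOn_lemma a)]
    exact hval
  · rw [hiff]
    exact hint.congr_fun (fun x hx => (lerch_eqOn_lemma a x hx).symm) measurableSet_Ioo

lemma lerch_exp_subst (l : ℝ) (hl : 0 < l) :
    ((fun t : ℝ => l * Real.exp (-t)) '' Ioi (0:ℝ) = Ioo (0:ℝ) l) ∧
    (∀ t ∈ Ioi (0:ℝ), HasDerivWithinAt (fun t : ℝ => l * Real.exp (-t))
      (-(l * Real.exp (-t))) (Ioi (0:ℝ)) t) ∧
    InjOn (fun t : ℝ => l * Real.exp (-t)) (Ioi (0:ℝ)) := by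
  refine ⟨?_, ?_, ?_⟩
  · ext u
    simp only [mem_image, mem_Ioi, mem_Ioo]
    constructor
    · rintro ⟨t, ht, rfl⟩
      constructor
      · positivity
      · have : Real.exp (-t) < 1 := Real.exp_lt_one_iff.mpr (by linarith)
        calc l * Real.exp (-t) < l * 1 := by exact (mul_lt_mul_iff_right₀ hl).mpr this
          _ = l := mul_one l
    · rintro ⟨hu0, hul⟩
      refine ⟨-Real.log (u / l), ?_, ?_⟩
      · have : Real.log (u / l) < 0 :=
          Real.log_neg (div_pos hu0 hl) ((div_lt_one hl).mpr hul)
        linarith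
      · rw [neg_neg, Real.exp_log (div_pos hu0 hl)]
        field_simp
  · intro t _
    have h := ((hasDerivAt_neg t).exp.const_mul l)
    refine h.hasDerivWithinAt.congr_deriv ?_
    ring
  · intro t₁ _ t₂ _ h
    simp only at h
    have := mul_left_cancel₀ hl.ne' h
    have := Real.exp_injective this
    linarith [neg_injective this]

lemma lerch_eqOn_exp (a l : ℝ) (hl : 0 < l) : ∀ t ∈ Ioi (0:ℝ),
    |(-(l * Real.exp (-t)))| • ((l * Real.exp (-t)) ^ (a-1) / (1 + l * Real.exp (-t)))
      = l ^ a * (Real.exp (-a * t) / (1 + l * Real.exp (-t))) := by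
  intro t _
  have hw : 0 < l * Real.exp (-t) := by positivity
  rw [smul_eq_mul, abs_neg, abs_of_pos hw]
  rw [mul_div_assoc']
  congr 1
  rw [mul_comm, ← Real.rpow_add_one hw.ne' (a-1), sub_add_cancel,
    Real.mul_rpow hl.le (Real.exp_nonneg _),
    Real.rpow_def_of_pos (Real.exp_pos _), Real.log_exp]
  congr 1
  ring

lemma lerch_key (a l : ℝ) (hl : 0 < l) :
    l ^ a * (∫ t in Ioi (0:ℝ), Real.exp (-a * t) / (1 + l * Real.exp (-t)))
      = ∫ u in Ioo (0:ℝ) l, u ^ (a-1) / (1 + u) := by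
  obtain ⟨himg, hder, hinj⟩ := lerch_exp_subst l hl
  have hchg := integral_image_eq_integral_abs_deriv_smul measurableSet_Ioi hder hinj
    (fun u : ℝ => u ^ (a-1) / (1 + u))
  rw [himg] at hchg
  rw [hchg, setIntegral_congr_fun measurableSet_Ioi (lerch_eqOn_exp a l hl),
    integral_const_mul]

/-- For `a ∈ (0,1)`, with `Φ(z,1,a) = ∫₀^∞ e^{-at}/(1 - z e^{-t}) dt`,
we have `lim_{z→-∞} (-z)^a · Φ(z,1,a) = π / sin(aπ)`. -/
theorem lerch_asymptotic_s_one (a : ℝ) (ha0 : 0 < a) (ha1 : a < 1) :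
    Tendsto (fun z : ℝ =>
        (-z) ^ a * ∫ t in Ioi (0:ℝ), Real.exp (-a * t) / (1 - z * Real.exp (-t)))
      atBot (𝓝 (π / Real.sin (a * π))) := by
  obtain ⟨hval, hint⟩ := lerch_F_integral a ha0 ha1
  have hG : Tendsto (fun l : ℝ => ∫ u in Ioo (0:ℝ) l, u ^ (a-1) / (1 + u))
      atTop (𝓝 (π / Real.sin (π * a))) := by
    rw [← hval]
    have h := intervalIntegral_tendsto_integral_Ioi 0 hint tendsto_id
    apply h.congr'
    filter_upwards [eventually_ge_atTop (0:ℝ)] with l hl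
    simp only [id]
    rw [intervalIntegral.integral_of_le hl, integral_Ioc_eq_integral_Ioo]
  have hcomp : Tendsto (fun z : ℝ => ∫ u in Ioo (0:ℝ) (-z), u ^ (a-1) / (1 + u))
      atBot (𝓝 (π / Real.sin (π * a))) := hG.comp tendsto_neg_atBot_atTop
  rw [show a * π = π * a from mul_comm a π]
  apply hcomp.congr'
  filter_upwards [eventually_lt_atBot (0:ℝ)] with z hz
  have hl : 0 < -z := by linarith
  rw [← lerch_key a (-z) hl]
  congr 1
  apply setIntegral_congr_fun measurableSet_Ioi
  intro t _
  simp only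
  ring_nf
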